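/- Let F be an n×n real column-stochastic matrix and k₀ ≥ 1 an integer such that every entry of F^{k₀} is strictly positive (F is primitive with exponent at most k₀). Set α_i = min_j (F^{k₀})_{ij}, g = ∑_{i=1}^n α_i, and assume g < 1. Let u ∈ ℝⁿ with ∑_j u_j = 0, and let β = max{ ‖F^r u‖₁ : 0 ≤ r ≤ k₀ − 1 }. Then for every integer k ≥ 0, ‖F^k u‖₁ ≤ (β / (1 − g)^{1 − 1/k₀}) · ((1 − g)^{1/k₀})^k. -/

import Mathlib

open Matrix Finset

private lemma colstoch_pow {n : ℕ} (F : Matrix (Fin n) (Fin n) ℝ)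
    (hcol : ∀ j, ∑ i, F i j = 1) (m : ℕ) (j : Fin n) : ∑ i, (F ^ m) i j = 1 := by
  induction m generalizing j with
  | zero =>
    simp [Matrix.one_apply]
  | succ m ih =>
    rw [pow_succ]
    simp only [Matrix.mul_apply]
    rw [Finset.sum_comm]
    calc ∑ k, ∑ i, (F ^ m) i k * F k j = ∑ k, (∑ i, (F ^ m) i k) * F k j := by
          simp [Finset.sum_mul]
      _ = ∑ k, F k j := by simp [ih]
      _ = 1 := hcol j

private lemma zerosum_pres {n : ℕ} (F : Matrix (Fin n) (Fin n) ℝ)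
    (hcol : ∀ j, ∑ i, F i j = 1) (v : Fin n → ℝ) :
    ∑ i, F.mulVec v i = ∑ j, v j := by
  simp only [Matrix.mulVec, dotProduct]
  rw [Finset.sum_comm]
  refine Finset.sum_congr rfl fun j _ => ?_
  rw [← Finset.sum_mul, hcol j, one_mul]

theorem cohesive_convergence_rate (n : ℕ)
    (F : Matrix (Fin n) (Fin n) ℝ)
    (hF : ∀ i j, 0 ≤ F i j) (hcol : ∀ j, ∑ i, F i j = 1)
    (k₀ : ℕ) (hk₀ : 1 ≤ k₀)
    (hprim : ∀ i j, 0 < (F ^ k₀) i j)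
    (g : ℝ) (hg : g = ∑ i, ⨅ j, (F ^ k₀) i j) (hg1 : g < 1)
    (u : Fin n → ℝ) (hu : ∑ j, u j = 0)
    (β : ℝ)
    (hβ : β = (Finset.range k₀).sup' (Finset.nonempty_range_iff.mpr (by omega))
      (fun r => ∑ i, |(F ^ r).mulVec u i|)) :
    ∀ k : ℕ, ∑ i, |(F ^ k).mulVec u i| ≤
      (β / (1 - g) ^ ((1 : ℝ) - 1 / (k₀ : ℝ))) * ((1 - g) ^ ((1 : ℝ) / (k₀ : ℝ))) ^ k := by
  -- notation
  set P := F ^ k₀ with hP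
  have hPcol : ∀ j, ∑ i, P i j = 1 := colstoch_pow F hcol k₀
  have hpowcol : ∀ m j, ∑ i, (F ^ m) i j = 1 := colstoch_pow F hcol
  -- g ≥ 0
  have hg0 : 0 ≤ g := by
    rw [hg]
    refine Finset.sum_nonneg fun i _ => ?_
    have : Nonempty (Fin n) := ⟨i⟩
    exact le_ciInf fun j => (hprim i j).le
  have hb : (0:ℝ) < 1 - g := by linarith
  have hb1 : 1 - g ≤ 1 := by linarith
  -- zero-sum preserved
  have hzs : ∀ m, ∑ i, (F ^ m).mulVec u i = 0 := by
    intro m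
    induction m with
    | zero => simpa using hu
    | succ m ih =>
      rw [pow_succ', ← Matrix.mulVec_mulVec, zerosum_pres F hcol, ih]
  -- key contraction
  have key : ∀ v : Fin n → ℝ, ∑ j, v j = 0 →
      ∑ i, |P.mulVec v i| ≤ (1 - g) * ∑ i, |v i| := by
    intro v hv
    have hα : ∀ i j, (⨅ j', P i j') ≤ P i j := fun i j =>
      ciInf_le (Set.Finite.bddBelow (Set.finite_range _)) j
    calc ∑ i, |P.mulVec v i|
        = ∑ i, |∑ j, (P i j - ⨅ j', P i j') * v j| := by
          refine Finset.sum_congr rfl fun i _ => ?_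
          congr 1
          simp only [Matrix.mulVec, dotProduct, sub_mul]
          rw [Finset.sum_sub_distrib, ← Finset.mul_sum, hv, mul_zero, sub_zero]
      _ ≤ ∑ i, ∑ j, (P i j - ⨅ j', P i j') * |v j| := by
          refine Finset.sum_le_sum fun i _ => ?_
          refine (Finset.abs_sum_le_sum_abs _ _).trans (le_of_eq ?_)
          refine Finset.sum_congr rfl fun j _ => ?_
          rw [abs_mul, abs_of_nonneg (by linarith [hα i j])]
      _ = ∑ j, (1 - g) * |v j| := by
          rw [Finset.sum_comm]
          refine Finset.sum_congr rfl fun j _ => ?_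
          rw [← Finset.sum_mul]
          congr 1
          rw [Finset.sum_sub_distrib, hPcol j, hg]
      _ = (1 - g) * ∑ i, |v i| := by rw [← Finset.mul_sum]
  -- iterated contraction
  have iter : ∀ q r : ℕ, ∑ i, |(F ^ (q * k₀ + r)).mulVec u i|
      ≤ (1 - g) ^ q * ∑ i, |(F ^ r).mulVec u i| := by
    intro q r
    induction q with
    | zero => simp
    | succ q ih =>
      have heq : (q + 1) * k₀ + r = k₀ + (q * k₀ + r) := by ring
      rw [heq, pow_add, ← Matrix.mulVec_mulVec]
      calc ∑ i, |P.mulVec ((F ^ (q * k₀ + r)).mulVec u) i|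
          ≤ (1 - g) * ∑ i, |(F ^ (q * k₀ + r)).mulVec u i| := key _ (hzs _)
        _ ≤ (1 - g) * ((1 - g) ^ q * ∑ i, |(F ^ r).mulVec u i|) := by
            exact mul_le_mul_of_nonneg_left ih hb.le
        _ = (1 - g) ^ (q + 1) * ∑ i, |(F ^ r).mulVec u i| := by ring
  -- β bounds
  have hβr : ∀ r < k₀, ∑ i, |(F ^ r).mulVec u i| ≤ β := by
    intro r hr
    rw [hβ]
    exact Finset.le_sup' (fun r => ∑ i, |(F ^ r).mulVec u i|) (Finset.mem_range.mpr hr)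
  have hβ0 : 0 ≤ β := le_trans (Finset.sum_nonneg fun i _ => abs_nonneg _)
    (hβr 0 (by omega))
  -- conclude
  intro k
  set q := k / k₀ with hq
  set r := k % k₀ with hr
  have hkdec : q * k₀ + r = k := by
    rw [hq, hr, Nat.mul_comm]; exact Nat.div_add_mod k k₀
  have hrlt : r < k₀ := Nat.mod_lt _ (by omega)
  have step1 : ∑ i, |(F ^ k).mulVec u i| ≤ (1 - g) ^ q * β := by
    rw [← hkdec]
    exact (iter q r).trans (mul_le_mul_of_nonneg_left (hβr r hrlt) (pow_nonneg hb.le q))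
  refine step1.trans ?_
  have hk₀R : (0:ℝ) < (k₀ : ℝ) := by exact_mod_cast hk₀
  have hexp : (k : ℝ) / (k₀ : ℝ) ≤ (q : ℝ) + (1 - 1 / (k₀ : ℝ)) := by
    have hkk : (k : ℝ) = (q : ℝ) * (k₀ : ℝ) + (r : ℝ) := by
      rw [← hkdec]; push_cast; ring
    have hrR : (r : ℝ) + 1 ≤ (k₀ : ℝ) := by exact_mod_cast hrlt
    have h1 : (k : ℝ) + 1 ≤ ((q : ℝ) + 1) * (k₀ : ℝ) := by nlinarith
    have h2 : (k : ℝ) / (k₀ : ℝ) + 1 / (k₀ : ℝ) ≤ (q : ℝ) + 1 := by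
      rw [← add_div, div_le_iff₀ hk₀R]; linarith
    linarith
  have hA : ((1 - g) ^ ((1:ℝ)/(k₀:ℝ))) ^ k = (1 - g) ^ ((k:ℝ)/(k₀:ℝ)) := by
    rw [← Real.rpow_natCast ((1 - g) ^ ((1:ℝ)/(k₀:ℝ))) k, ← Real.rpow_mul hb.le]
    congr 1; ring
  rw [hA, div_mul_eq_mul_div, le_div_iff₀ (Real.rpow_pos_of_pos hb _)]
  have hB : (1 - g) ^ q * β * (1 - g) ^ ((1:ℝ) - 1/(k₀:ℝ))
      = β * (1 - g) ^ ((q:ℝ) + ((1:ℝ) - 1/(k₀:ℝ))) := by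
    rw [Real.rpow_add hb, ← Real.rpow_natCast (1 - g) q]; ring
  rw [hB]
  exact mul_le_mul_of_nonneg_left (Real.rpow_le_rpow_of_exponent_ge hb hb1 hexp) hβ0
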